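/- arXiv:2602.00784 — 2 statements merged into one kernel-verified Lean document; each statement's English description precedes it below -/
import Mathlib

section
/- For any a ∈ Δ_n^↓, the functional ρ(x) := ∑_{i=1}^n a_i(−x_{i:n}) on ℝ^n is subadditive: ρ(x+y) ≤ ρ(x) + ρ(y) for all x, y ∈ ℝ^n. -/
open Finset

/-- The `i`-th order statistic (`i`-th smallest coordinate, `i = 1,…,n`) of `x ∈ ℝ^n`. -/
noncomputable def orderStat {n : ℕ} (x : Fin n → ℝ) (i : ℕ) : ℝ :=
  ((Finset.univ.val.map x).sort (· ≤ ·)).getD (i - 1) 0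

/-- Any sub-multiset of a sorted list has sum at least the sum of the first `length` elements. -/
private lemma take_sum_le_sum : ∀ (l₂ l₁ : List ℝ), l₁.Pairwise (· ≤ ·) → l₂.Pairwise (· ≤ ·) →
    (l₂ : Multiset ℝ) ≤ (l₁ : Multiset ℝ) → (l₁.take l₂.length).sum ≤ l₂.sum := by
  intro l₂
  induction l₂ with
  | nil => intro l₁ _ _ _; simp
  | cons b l₂' ih =>
    intro l₁ h1 h2 hle
    have hb : b ∈ l₁ := by
      have : b ∈ (↑(b :: l₂') : Multiset ℝ) := by simp
      have := Multiset.mem_of_le hle this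
      simpa using this
    match l₁, h1 with
    | c :: l₁', h1 =>
      have hcb : c ≤ b := by
        rcases List.mem_cons.mp hb with h | h
        · exact h.ge
        · exact (List.pairwise_cons.mp h1).1 b h
      -- show (↑l₂' : Multiset ℝ) ≤ ↑l₁'
      have hle' : (↑l₂' : Multiset ℝ) ≤ (↑l₁' : Multiset ℝ) := by
        rw [Multiset.le_iff_count]
        intro v
        have hv := Multiset.le_iff_count.mp hle v
        simp only [Multiset.coe_count, List.count_cons, beq_iff_eq] at hv ⊢
        by_cases hvc : c = v
        · subst hvc
          by_cases hcb' : b = c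
          · subst hcb'; simpa using hv
          · have hlt : c < b := lt_of_le_of_ne hcb (Ne.symm hcb')
            have hnm : c ∉ l₂' := by
              intro hmem
              exact absurd ((List.pairwise_cons.mp h2).1 c hmem) (not_le.mpr hlt)
            simp [List.count_eq_zero_of_not_mem hnm]
        · rw [if_neg hvc] at hv
          by_cases hbv : b = v
          · rw [if_pos hbv] at hv; omega
          · rw [if_neg hbv] at hv; omega
      have ihres := ih l₁' (List.pairwise_cons.mp h1).2 (List.pairwise_cons.mp h2).2 hle'
      simp only [List.length_cons, List.take_succ_cons, List.sum_cons]
      linarith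

/-- If `t ≤ s.map f` then `t` is the image of a sub-multiset of `s`. -/
private lemma exists_of_le_map {α β : Type*} {f : α → β} {s : Multiset α} {t : Multiset β}
    (h : t ≤ s.map f) : ∃ u, u ≤ s ∧ u.map f = t := by
  induction s using Quot.inductionOn with
  | _ l =>
    induction t using Quot.inductionOn with
    | _ lt =>
      have h' : lt.Subperm (l.map f) := by
        rw [← Multiset.coe_le]; simpa using h
      obtain ⟨l', hperm, hsub⟩ := h'
      obtain ⟨l'', hsub2, rfl⟩ := List.sublist_map_iff.mp hsub
      refine ⟨↑l'', Multiset.coe_le.mpr hsub2.subperm, ?_⟩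
      show ((l''.map f : List β) : Multiset β) = (lt : Multiset β)
      exact Multiset.coe_eq_coe.mpr hperm

private noncomputable def sortedL {n : ℕ} (x : Fin n → ℝ) : List ℝ :=
  (Finset.univ.val.map x).sort (· ≤ ·)

private lemma coe_sortedL {n : ℕ} (x : Fin n → ℝ) :
    ((sortedL x : List ℝ) : Multiset ℝ) = Finset.univ.val.map x :=
  Multiset.sort_eq _ _

private lemma sorted_sortedL {n : ℕ} (x : Fin n → ℝ) : (sortedL x).Pairwise (· ≤ ·) :=
  Multiset.pairwise_sort _ _

private lemma length_sortedL {n : ℕ} (x : Fin n → ℝ) : (sortedL x).length = n := by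
  rw [sortedL, Multiset.length_sort]
  simp

private lemma orderStat_eq {n : ℕ} (x : Fin n → ℝ) (j : ℕ) :
    orderStat x (j + 1) = (sortedL x).getD j 0 := by
  rw [orderStat, sortedL, Nat.add_sub_cancel]

/-- sum of first k entries of sorted list, via getD. -/
private lemma sum_getD_eq_take {n : ℕ} (x : Fin n → ℝ) (k : ℕ) (hk : k ≤ n) :
    ∑ i ∈ Finset.range k, (sortedL x).getD i 0 = ((sortedL x).take k).sum := by
  induction k with
  | zero => simp
  | succ m ih =>
    have hm : m < (sortedL x).length := by rw [length_sortedL]; omega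
    rw [Finset.sum_range_succ, ih (le_of_lt (Nat.lt_of_succ_le hk)),
      List.sum_take_succ _ _ hm, List.getD_eq_getElem?_getD, List.getElem?_eq_getElem hm]
    simp

/-- sum of any subset dominates the take-card sum of the sorted list. -/
private lemma take_le_finset_sum {n : ℕ} (x : Fin n → ℝ) (A : Finset (Fin n)) :
    ((sortedL x).take A.card).sum ≤ ∑ j ∈ A, x j := by
  have hsub : (A.val.map x) ≤ (Finset.univ.val.map x) :=
    Multiset.map_le_map ((Multiset.le_iff_subset A.nodup).mpr (fun v hv => Finset.mem_val.mpr (Finset.mem_univ v)))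
  have hkey := take_sum_le_sum ((A.val.map x).sort (· ≤ ·)) (sortedL x)
    (sorted_sortedL x) (Multiset.pairwise_sort _ _)
    (by rw [Multiset.sort_eq, coe_sortedL]; exact hsub)
  rw [Finset.sum_eq_multiset_sum]
  have hlen : ((A.val.map x).sort (· ≤ ·)).length = A.card := by
    rw [Multiset.length_sort, Multiset.card_map]; rfl
  have hsum : ((A.val.map x).sort (· ≤ ·)).sum = (A.val.map x).sum := by
    rw [← Multiset.sum_coe, Multiset.sort_eq]
  rw [hlen, hsum] at hkey
  exact hkey

/-- superadditivity of take-k sums. -/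
private lemma take_superadd {n : ℕ} (x y : Fin n → ℝ) (k : ℕ) (hk : k ≤ n) :
    ((sortedL x).take k).sum + ((sortedL y).take k).sum
      ≤ ((sortedL (fun j => x j + y j)).take k).sum := by
  set z := fun j => x j + y j with hz
  have hlen : k ≤ (sortedL z).length := by rw [length_sortedL]; exact hk
  have htle : (↑((sortedL z).take k) : Multiset ℝ) ≤ Finset.univ.val.map z := by
    rw [← coe_sortedL z]
    exact Multiset.coe_le.mpr (List.take_sublist k _).subperm
  obtain ⟨u, hus, humap⟩ := exists_of_le_map htle
  have hnodup : u.Nodup := Multiset.nodup_of_le hus Finset.univ.nodup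
  set A : Finset (Fin n) := ⟨u, hnodup⟩ with hA
  have hcardA : A.card = k := by
    have hcm : Multiset.card (u.map z) = k := by
      rw [humap, Multiset.coe_card, List.length_take]
      omega
    rw [Multiset.card_map] at hcm
    exact hcm
  have hsumA : ∑ j ∈ A, z j = ((sortedL z).take k).sum := by
    rw [Finset.sum_eq_multiset_sum]
    show (Multiset.map z u).sum = _
    rw [humap, Multiset.sum_coe]
  have hx := take_le_finset_sum x A
  have hy := take_le_finset_sum y A
  rw [hcardA] at hx hy
  have hsplit : ∑ j ∈ A, z j = (∑ j ∈ A, x j) + ∑ j ∈ A, y j := by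
    rw [← Finset.sum_add_distrib]
  linarith

/-- total sum. -/
private lemma take_all_sum {n : ℕ} (x : Fin n → ℝ) :
    ((sortedL x).take n).sum = ∑ j, x j := by
  rw [List.take_of_length_le (by rw [length_sortedL]), ← Multiset.sum_coe, coe_sortedL,
    ← Finset.sum_eq_multiset_sum]

/-- Abel summation induction step. -/
private lemma abel_aux (a d : ℕ → ℝ) : ∀ k, 1 ≤ k →
    (∀ j, 1 ≤ j → j ≤ k → 0 ≤ ∑ i ∈ Finset.range j, d i) →
    (∀ j, 1 ≤ j → j < k → a (j + 1) ≤ a j) →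
    a k * ∑ i ∈ Finset.range k, d i ≤ ∑ i ∈ Finset.range k, a (i + 1) * d i := by
  intro k
  induction k with
  | zero => omega
  | succ m ih =>
    intro _ hP ha
    by_cases hm : m = 0
    · subst hm; simp
    · have hm1 : 1 ≤ m := Nat.one_le_iff_ne_zero.mpr hm
      have ihm := ih hm1 (fun j hj1 hj2 => hP j hj1 (le_trans hj2 (Nat.le_succ m)))
        (fun j hj1 hj2 => ha j hj1 (Nat.lt_succ_of_lt hj2))
      rw [Finset.sum_range_succ, Finset.sum_range_succ (fun i => a (i+1) * d i)]
      have hPm : 0 ≤ ∑ i ∈ Finset.range m, d i := hP m hm1 (Nat.le_succ m)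
      have ham : a (m + 1) ≤ a m := ha m hm1 (Nat.lt_succ_self m)
      nlinarith [ihm]

/-- For `a ∈ Δ_n^↓`, the L-functional `ρ(x) = ∑_{i=1}^n a_i (-x_{i:n})`
is subadditive. -/
theorem L_functional_subadditive (n : ℕ) (a : ℕ → ℝ)
    (ha_nonneg : ∀ i ∈ Finset.Icc 1 n, 0 ≤ a i)
    (ha_mono : ∀ i j, 1 ≤ i → i ≤ j → j ≤ n → a j ≤ a i)
    (ha_sum : ∑ i ∈ Finset.Icc 1 n, a i = 1)
    (x y : Fin n → ℝ) :
    ∑ i ∈ Finset.Icc 1 n, a i * (-(orderStat (fun j => x j + y j) i)) ≤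
      (∑ i ∈ Finset.Icc 1 n, a i * (-(orderStat x i))) +
        ∑ i ∈ Finset.Icc 1 n, a i * (-(orderStat y i)) := by
  rcases Nat.eq_zero_or_pos n with hn | hn
  · subst hn; simp
  set z := fun j => x j + y j with hz
  set d : ℕ → ℝ := fun i => (sortedL z).getD i 0 - (sortedL x).getD i 0 - (sortedL y).getD i 0
    with hd
  have hP : ∀ j, 1 ≤ j → j ≤ n → 0 ≤ ∑ i ∈ Finset.range j, d i := by
    intro j _ hjn
    have heq : ∑ i ∈ Finset.range j, d i
        = ((sortedL z).take j).sum - ((sortedL x).take j).sum - ((sortedL y).take j).sum := by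
      simp only [hd, Finset.sum_sub_distrib]
      rw [sum_getD_eq_take z j hjn, sum_getD_eq_take x j hjn, sum_getD_eq_take y j hjn]
    rw [heq]
    have := take_superadd x y j hjn
    linarith
  have hPn : ∑ i ∈ Finset.range n, d i = 0 := by
    have heq : ∑ i ∈ Finset.range n, d i
        = ((sortedL z).take n).sum - ((sortedL x).take n).sum - ((sortedL y).take n).sum := by
      simp only [hd, Finset.sum_sub_distrib]
      rw [sum_getD_eq_take z n le_rfl, sum_getD_eq_take x n le_rfl, sum_getD_eq_take y n le_rfl]
    rw [heq, take_all_sum, take_all_sum, take_all_sum]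
    simp [hz, Finset.sum_add_distrib]
  have habel := abel_aux a d n hn (fun j h1 h2 => hP j h1 h2)
    (fun j hj1 hj2 => ha_mono j (j + 1) hj1 (Nat.le_succ j) hj2)
  rw [hPn, mul_zero] at habel
  have hconv : ∀ (w : Fin n → ℝ), ∑ i ∈ Finset.Icc 1 n, a i * (-(orderStat w i))
      = ∑ i ∈ Finset.range n, a (i + 1) * (-((sortedL w).getD i 0)) := by
    intro w
    rw [← Finset.Ico_add_one_right_eq_Icc, Finset.sum_Ico_eq_sum_range]
    refine Finset.sum_congr rfl fun i _ => ?_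
    rw [show 1 + i = i + 1 by ring, orderStat_eq]
  rw [hconv z, hconv x, hconv y]
  have hkey : ∑ i ∈ Finset.range n, a (i + 1) * d i
      = (∑ i ∈ Finset.range n, a (i + 1) * (-((sortedL x).getD i 0)))
        + (∑ i ∈ Finset.range n, a (i + 1) * (-((sortedL y).getD i 0)))
        - ∑ i ∈ Finset.range n, a (i + 1) * (-((sortedL z).getD i 0)) := by
    rw [← Finset.sum_add_distrib, ← Finset.sum_sub_distrib]
    refine Finset.sum_congr rfl fun i _ => ?_
    simp only [hd]; ring
  linarith
end

section
/- If ρ̂: ℝ^n → ℝ is a law-invariant coherent risk estimator that is comonotonic additive (ρ̂(x+y) = ρ̂(x) + ρ̂(y) whenever (x_i−x_j)(y_i−y_j) ≥ 0 for all i,j), then there exists a unique a ∈ Δ_n^↓ such that ρ̂(x) = ∑_{i=1}^n a_i(−x_{i:n}) for all x ∈ ℝ^n. -/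
lemma sortList_of_monotone {n : ℕ} (y : Fin n → ℝ) (hy : Monotone y) :
    (Finset.univ.val.map y).sort (· ≤ ·) = List.ofFn y := by
  refine List.Perm.eq_of_pairwise' (Multiset.pairwise_sort _ _) hy.sortedLE_ofFn.pairwise ?_
  apply Multiset.coe_eq_coe.mp
  rw [Multiset.sort_eq, Fin.univ_val_map]

lemma orderStat_of_monotone {n : ℕ} (y : Fin n → ℝ) (hy : Monotone y) (i : Fin n) :
    orderStat y (i.1 + 1) = y i := by
  unfold orderStat
  rw [sortList_of_monotone y hy]
  have hl : i.1 < (List.ofFn y).length := by simpa using i.isLt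
  rw [Nat.add_sub_cancel, List.getD_eq_getElem _ _ hl, List.getElem_ofFn]

lemma orderStat_comp_perm {n : ℕ} (x : Fin n → ℝ) (σ : Equiv.Perm (Fin n)) (k : ℕ) :
    orderStat (x ∘ σ) k = orderStat x k := by
  unfold orderStat
  have hms : Finset.univ.val.map (x ∘ ⇑σ) = Finset.univ.val.map x := by
    rw [← Multiset.map_map]
    congr 1
    calc Finset.univ.val.map ⇑σ = (Finset.univ.map σ.toEmbedding).val := rfl
    _ = Finset.univ.val := by rw [Finset.map_univ_equiv]
  rw [hms]

/-- Comonotonic law-invariant CREs are L-estimators: there is a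
unique non-increasing probability vector `a` with
`ρ̂(x) = ∑_i a_i (-x_{i:n})` for all `x`. -/
theorem comonotonic_CRE_representation (n : ℕ) (ρ : (Fin n → ℝ) → ℝ)
    (h_mono : ∀ x y : Fin n → ℝ, (∀ i, x i ≤ y i) → ρ y ≤ ρ x)
    (h_cash : ∀ (x : Fin n → ℝ) (m : ℝ), ρ (fun i => x i + m) = ρ x - m)
    (h_hom : ∀ (x : Fin n → ℝ) (l : ℝ), 0 ≤ l → ρ (fun i => l * x i) = l * ρ x)
    (h_sub : ∀ x y : Fin n → ℝ, ρ (fun i => x i + y i) ≤ ρ x + ρ y)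
    (h_law : ∀ (x : Fin n → ℝ) (σ : Equiv.Perm (Fin n)), ρ (x ∘ σ) = ρ x)
    (h_com : ∀ x y : Fin n → ℝ, (∀ i j, 0 ≤ (x i - x j) * (y i - y j)) →
      ρ (fun i => x i + y i) = ρ x + ρ y) :
    ∃! a : Fin n → ℝ,
      ((∀ i, 0 ≤ a i) ∧ (∀ i j : Fin n, i ≤ j → a j ≤ a i) ∧ ∑ i, a i = 1) ∧
        ∀ x : Fin n → ℝ, ρ x = ∑ i : Fin n, a i * (-(orderStat x (i + 1))) := by
  rcases Nat.eq_zero_or_pos n with h0 | hn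
  · exfalso
    subst h0
    have h := h_cash (fun _ => 0) 1
    have h2 : (fun (i : Fin 0) => (fun _ => (0:ℝ)) i + 1) = (fun _ => (0:ℝ)) := by
      funext i; exact i.elim0
    rw [h2] at h; linarith
  -- basic consequences
  have hρ0 : ρ (fun _ => 0) = 0 := by
    have := h_hom (fun _ => 0) 0 le_rfl
    simpa using this
  have hconst : ∀ c : ℝ, ρ (fun _ => c) = -c := by
    intro c
    have h := h_cash (fun _ => 0) c
    simp only [zero_add] at h
    rw [h, hρ0, zero_sub]
  have hadd : ∀ x y : Fin n → ℝ, Monotone x → Monotone y →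
      ρ (fun i => x i + y i) = ρ x + ρ y := by
    intro x y hx hy
    apply h_com
    intro i j
    rcases le_total i j with h | h
    · nlinarith [mul_nonneg (sub_nonneg.mpr (hx h)) (sub_nonneg.mpr (hy h))]
    · nlinarith [mul_nonneg (sub_nonneg.mpr (hx h)) (sub_nonneg.mpr (hy h))]
  -- the indicator vectors and their risks
  set V : ℕ → Fin n → ℝ := fun k i => if k ≤ i.1 then 1 else 0 with hVdef
  have hVmono : ∀ k, Monotone (V k) := by
    intro k i j hij
    dsimp [V]
    by_cases h1 : k ≤ i.1
    · rw [if_pos h1, if_pos (le_trans h1 hij)]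
    · by_cases h2 : k ≤ j.1
      · rw [if_neg h1, if_pos h2]; norm_num
      · rw [if_neg h1, if_neg h2]
  set s : ℕ → ℝ := fun k => ρ (V k) with hsdef
  have hs0 : s 0 = -1 := by
    have h1 : V 0 = fun _ => (1:ℝ) := by funext i; simp [V]
    show ρ (V 0) = -1
    rw [h1, hconst]
  have hsn : ∀ k, n ≤ k → s k = 0 := by
    intro k hk
    have h1 : V k = fun _ => (0:ℝ) := by
      funext i
      have := i.isLt
      simp only [V]
      rw [if_neg (by omega)]
    show ρ (V k) = 0
    rw [h1, hρ0]
  have hsmono : ∀ k, s k ≤ s (k + 1) := by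
    intro k
    refine h_mono (V (k + 1)) (V k) ?_
    intro i
    dsimp [V]
    by_cases h1 : k + 1 ≤ i.1
    · rw [if_pos h1, if_pos (by omega)]
    · rw [if_neg h1]
      split_ifs <;> norm_num
  have hsconc : ∀ k, k + 1 < n → s k + s (k + 2) ≤ 2 * s (k + 1) := by
    intro k hk
    have hk0 : k < n := by omega
    set σ : Equiv.Perm (Fin n) := Equiv.swap ⟨k, hk0⟩ ⟨k + 1, hk⟩ with hσ
    have key : (fun i => V k i + V (k + 2) i) = (fun i => V (k + 1) i + V (k + 1) (σ i)) := by
      funext i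
      rcases eq_or_ne i ⟨k, hk0⟩ with h | h
      · subst h
        rw [hσ, Equiv.swap_apply_left]
        simp only [V]
        rw [if_pos le_rfl, if_neg (by omega), if_neg (by omega), if_pos (by omega)]
        all_goals norm_num
      · rcases eq_or_ne i ⟨k + 1, hk⟩ with h2 | h2
        · subst h2
          rw [hσ, Equiv.swap_apply_right]
          simp only [V]
          rw [if_pos (by omega), if_neg (by omega), if_pos (by omega), if_neg (by omega)]
          all_goals norm_num
        · rw [hσ, Equiv.swap_apply_of_ne_of_ne h h2]
          simp only [V]
          have hik : i.1 ≠ k := fun hh => h (Fin.ext hh)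
          have hik1 : i.1 ≠ k + 1 := fun hh => h2 (Fin.ext hh)
          by_cases hki : k ≤ i.1
          · rw [if_pos hki, if_pos (by omega), if_pos (by omega)]
          · rw [if_neg hki, if_neg (by omega), if_neg (by omega)]
    have e1 : ρ (fun i => V k i + V (k + 2) i) = s k + s (k + 2) :=
      hadd _ _ (hVmono k) (hVmono (k + 2))
    have e2 : ρ (fun i => V (k + 1) i + (V (k + 1) ∘ σ) i) ≤ ρ (V (k + 1)) + ρ (V (k + 1) ∘ σ) :=
      h_sub _ _
    have e3 : ρ (V (k + 1) ∘ σ) = s (k + 1) := h_law _ σ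
    have e4 : (fun i => V (k + 1) i + (V (k + 1) ∘ σ) i)
        = (fun i => V (k + 1) i + V (k + 1) (σ i)) := rfl
    rw [key] at e1
    rw [e4, e1, e3] at e2
    have e5 : ρ (V (k + 1)) = s (k + 1) := rfl
    rw [e5] at e2
    linarith
  -- the candidate vector
  set a : Fin n → ℝ := fun i => s (i.1 + 1) - s i.1 with hadef
  have hann : ∀ i, 0 ≤ a i := fun i => sub_nonneg.mpr (hsmono i.1)
  have hasum : ∑ i, a i = 1 := by
    have h1 : ∑ i : Fin n, a i = ∑ k ∈ Finset.range n, (s (k + 1) - s k) :=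
      Fin.sum_univ_eq_sum_range (fun k => s (k + 1) - s k) n
    rw [h1, Finset.sum_range_sub s n, hsn n le_rfl, hs0]
    norm_num
  have hadec : ∀ i j : Fin n, i ≤ j → a j ≤ a i := by
    intro i j hij
    suffices h : ∀ p : ℕ, p < n → i.1 ≤ p → s (p + 1) - s p ≤ s (i.1 + 1) - s i.1 from
      h j.1 j.isLt hij
    intro p
    induction p with
    | zero =>
      intro _ h0
      have hi0 : i.1 = 0 := by omega
      rw [hi0]
    | succ p ih =>
      intro hp hip
      rcases Nat.lt_or_ge i.1 (p + 1) with h | h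
      · have h1 := ih (by omega) (by omega)
        have h2 := hsconc p hp
        have h3 : s (p + 1 + 1) = s (p + 2) := by norm_num
        rw [h3]
        linarith
      · have hi : i.1 = p + 1 := by omega
        rw [hi]
  -- the representation for monotone vectors
  have hformula : ∀ x : Fin n → ℝ, Monotone x → ρ x = ∑ i : Fin n, a i * (-(x i)) := by
    intro x hx
    set x' : ℕ → ℝ := fun k => if h : k < n then x ⟨k, h⟩ else 0 with hx'def
    set g : ℕ → ℝ := fun k => if k = 0 then x' 0 else x' k - x' (k - 1) with hgdef
    have hgnn : ∀ k, k < n → k ≠ 0 → 0 ≤ g k := by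
      intro k hk hk0
      have hk1 : k - 1 < n := by omega
      have hle : x ⟨k - 1, hk1⟩ ≤ x ⟨k, hk⟩ := hx (Fin.mk_le_mk.mpr (by omega))
      simp only [g, x', if_neg hk0, dif_pos hk, dif_pos hk1]
      linarith
    have hdecomp : ∀ i : Fin n, ∑ k ∈ Finset.range n, g k * V k i = x i := by
      intro i
      have h1 : ∀ k ∈ Finset.range n, g k * V k i
          = if k ∈ Finset.range (i.1 + 1) then g k else 0 := by
        intro k _
        dsimp [V]
        by_cases h : k ≤ i.1
        · rw [if_pos h, if_pos (Finset.mem_range.mpr (by omega)), mul_one]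
        · rw [if_neg h, if_neg (by simp only [Finset.mem_range]; omega), mul_zero]
      rw [Finset.sum_congr rfl h1, Finset.sum_ite_mem]
      have h2 : Finset.range n ∩ Finset.range (i.1 + 1) = Finset.range (i.1 + 1) := by
        refine Finset.inter_eq_right.mpr (Finset.range_subset_range.mpr ?_)
        have := i.isLt
        omega
      rw [h2, Finset.sum_range_succ']
      have h3 : ∀ k ∈ Finset.range i.1, g (k + 1) = x' (k + 1) - x' k := by
        intro k _; simp [g]
      rw [Finset.sum_congr rfl h3, Finset.sum_range_sub (fun k => x' k)]
      have h4 : g 0 = x' 0 := by simp [g]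
      have h5 : x' i.1 = x i := by simp [x', i.isLt]
      rw [h4, h5.symm]
      ring
    have hfmono : ∀ k, Monotone (fun i => g k * V k i) := by
      intro k
      rcases Nat.lt_or_ge k n with hk | hk
      · rcases eq_or_ne k 0 with rfl | hk0
        · have h1 : (fun i : Fin n => g 0 * V 0 i) = fun _ => g 0 * 1 := by
            funext i; simp [V]
          rw [h1]; exact monotone_const
        · intro i j hij
          exact mul_le_mul_of_nonneg_left (hVmono k hij) (hgnn k hk hk0)
      · have h1 : (fun i : Fin n => g k * V k i) = fun _ => 0 := by
          funext i
          have := i.isLt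
          simp only [V]
          rw [if_neg (by omega), mul_zero]
        rw [h1]; exact monotone_const
    have hsum : ∀ (p : ℕ) (f : ℕ → Fin n → ℝ), (∀ k, k < p → Monotone (f k)) →
        ρ (fun i => ∑ k ∈ Finset.range p, f k i) = ∑ k ∈ Finset.range p, ρ (f k) := by
      intro p
      induction p with
      | zero => intro f _; simpa using hρ0
      | succ p ih =>
        intro f hf
        have hmono_sum : Monotone (fun i => ∑ k ∈ Finset.range p, f k i) := by
          intro i j hij
          exact Finset.sum_le_sum fun k hk => hf k (by
            have := Finset.mem_range.mp hk; omega) hij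
        have h1 : (fun i => ∑ k ∈ Finset.range (p + 1), f k i)
            = (fun i => (∑ k ∈ Finset.range p, f k i) + f p i) := by
          funext i; rw [Finset.sum_range_succ]
        rw [h1, hadd _ _ hmono_sum (hf p (by omega)), ih f (fun k hk => hf k (by omega)),
          Finset.sum_range_succ]
    have step1 : ρ x = ∑ k ∈ Finset.range n, ρ (fun i => g k * V k i) := by
      have hxeq : x = (fun i => ∑ k ∈ Finset.range n, g k * V k i) :=
        funext fun i => (hdecomp i).symm
      rw [hxeq]
      exact hsum n (fun k i => g k * V k i) (fun k _ => hfmono k)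
    have hpiece : ∀ k ∈ Finset.range n, ρ (fun i => g k * V k i) = g k * s k := by
      intro k hk
      rcases eq_or_ne k 0 with rfl | hk0
      · have h1 : (fun i : Fin n => g 0 * V 0 i) = fun _ => g 0 := by
          funext i; simp [V]
        rw [h1, hconst, hs0]; ring
      · exact h_hom (V k) (g k) (hgnn k (Finset.mem_range.mp hk) hk0)
    rw [step1, Finset.sum_congr rfl hpiece]
    have habel : ∀ p : ℕ, ∑ k ∈ Finset.range (p + 1), g k * s k
        = (∑ i ∈ Finset.range (p + 1), x' i * (s i - s (i + 1))) + x' p * s (p + 1) := by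
      intro p
      induction p with
      | zero =>
        rw [Finset.sum_range_one, Finset.sum_range_one]
        have h4 : g 0 = x' 0 := by simp [g]
        rw [h4]; ring
      | succ p ih =>
        rw [Finset.sum_range_succ (fun i => x' i * (s i - s (i + 1))) (p + 1),
          Finset.sum_range_succ (fun k => g k * s k) (p + 1), ih]
        have h5 : g (p + 1) = x' (p + 1) - x' p := by simp [g]
        rw [h5]; ring
    have hrhs : ∑ i : Fin n, a i * (-(x i)) = ∑ k ∈ Finset.range n, x' k * (s k - s (k + 1)) := by
      have h6 : ∀ i : Fin n, a i * (-(x i)) = x' i.1 * (s i.1 - s (i.1 + 1)) := by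
        intro i
        have h7 : x' i.1 = x i := by simp [x', i.isLt]
        rw [h7]
        dsimp [a]
        ring
      rw [Finset.sum_congr rfl (fun i _ => h6 i)]
      exact Fin.sum_univ_eq_sum_range (fun k => x' k * (s k - s (k + 1))) n
    rw [hrhs]
    obtain ⟨p, hp⟩ : ∃ p, n = p + 1 := ⟨n - 1, by omega⟩
    rw [hp, habel p, ← hp, hsn n (by omega), mul_zero, add_zero]
  -- the full representation
  have main : ∀ x : Fin n → ℝ, ρ x = ∑ i : Fin n, a i * (-(orderStat x (i.1 + 1))) := by
    intro x
    have hσ : Monotone (x ∘ Tuple.sort x) := Tuple.monotone_sort x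
    rw [← h_law x (Tuple.sort x), hformula _ hσ]
    apply Finset.sum_congr rfl
    intro i _
    rw [← orderStat_comp_perm x (Tuple.sort x) (i.1 + 1), orderStat_of_monotone _ hσ i]
  refine ⟨a, ⟨⟨hann, hadec, hasum⟩, main⟩, ?_⟩
  rintro b ⟨⟨-, -, -⟩, hbrep⟩
  -- evaluate both representations on the indicator vectors
  have hindval : ∀ (c : Fin n → ℝ) (k : ℕ),
      ∑ i : Fin n, c i * (-(V k i))
        = -∑ i ∈ Finset.univ.filter (fun i : Fin n => k ≤ i.1), c i := by
    intro c k
    rw [Finset.sum_filter, ← Finset.sum_neg_distrib]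
    apply Finset.sum_congr rfl
    intro i _
    dsimp [V]
    split_ifs <;> ring
  have tails : ∀ k : ℕ,
      ∑ i ∈ Finset.univ.filter (fun i : Fin n => k ≤ i.1), b i
      = ∑ i ∈ Finset.univ.filter (fun i : Fin n => k ≤ i.1), a i := by
    intro k
    have h1 := hbrep (V k)
    have h2 := main (V k)
    have h3 : ∀ i : Fin n, orderStat (V k) (i.1 + 1) = V k i :=
      fun i => orderStat_of_monotone (V k) (hVmono k) i
    rw [Finset.sum_congr rfl (fun i _ => by rw [h3 i])] at h1
    rw [Finset.sum_congr rfl (fun i _ => by rw [h3 i])] at h2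
    rw [hindval b k] at h1
    rw [hindval a k] at h2
    have := h1.symm.trans h2
    linarith
  funext i
  have hsplit : ∀ c : Fin n → ℝ,
      ∑ j ∈ Finset.univ.filter (fun j : Fin n => i.1 ≤ j.1), c j
      = c i + ∑ j ∈ Finset.univ.filter (fun j : Fin n => i.1 + 1 ≤ j.1), c j := by
    intro c
    have h1 : Finset.univ.filter (fun j : Fin n => i.1 ≤ j.1)
        = insert i (Finset.univ.filter (fun j : Fin n => i.1 + 1 ≤ j.1)) := by
      ext j
      simp only [Finset.mem_filter, Finset.mem_univ, true_and, Finset.mem_insert, Fin.ext_iff]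
      omega
    rw [h1, Finset.sum_insert (by simp)]
  have t1 := tails i.1
  have t2 := tails (i.1 + 1)
  have hb := hsplit b
  have ha := hsplit a
  linarith
end
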